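/- Let n ∈ ℕ with n ≥ 1, let θ ∈ (0, π/2) and h > 0 be cone parameters, and let ε > 0. Then there exists a constant C > 0, depending only on n, θ, h and ε, with the following property: for every bounded open set Ω ⊆ ℝⁿ satisfying the cone property — for every x in the closure of Ω there exists a unit vector ξ ∈ ℝⁿ such that the open cone {x + y : y ∈ ℝⁿ, 0 < ‖y‖ < h, ⟨y, ξ⟩ > ‖y‖·cos θ} is contained in Ω — and every continuously differentiable function v : ℝⁿ → ℝ (ContDiff ℝ 1), one has sup_{x ∈ closure Ω} |v(x)| ≤ ε·(sup_{x ∈ closure Ω} |v(x)| + sup_{x ∈ closure Ω} ‖fderiv ℝ v (x)‖) + C·∫_Ω |v(x)| dx. -/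

import Mathlib

open MeasureTheory Filter Set

-- helper lemmas for binder sups over ℝ
private lemma biSup_le' {α : Type*} {s : Set α} {f : α → ℝ} {B : ℝ} (h0 : 0 ≤ B)
    (hB : ∀ x ∈ s, f x ≤ B) : (⨆ x ∈ s, f x) ≤ B := by
  refine Real.iSup_le (fun x => ?_) h0
  show (⨆ _ : x ∈ s, f x) ≤ B
  by_cases hx : x ∈ s
  · rw [ciSup_pos (f := fun _ : x ∈ s => f x) hx]; exact hB x hx
  · haveI : IsEmpty (x ∈ s) := ⟨hx⟩
    rw [Real.iSup_of_isEmpty]; exact h0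

private lemma le_biSup' {α : Type*} {s : Set α} {f : α → ℝ} {B : ℝ}
    (hB : ∀ x ∈ s, f x ≤ B) {x : α} (hx : x ∈ s) : f x ≤ ⨆ y ∈ s, f y := by
  have hbdd : BddAbove (Set.range fun y => ⨆ _ : y ∈ s, f y) := by
    refine ⟨max B 0, fun r hr => ?_⟩
    obtain ⟨y, rfl⟩ := hr
    show (⨆ _ : y ∈ s, f y) ≤ max B 0
    by_cases hy : y ∈ s
    · rw [ciSup_pos (f := fun _ : y ∈ s => f y) hy]; exact le_max_of_le_left (hB y hy)
    · haveI : IsEmpty (y ∈ s) := ⟨hy⟩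
      rw [Real.iSup_of_isEmpty]; exact le_max_right _ _
  calc f x = ⨆ _ : x ∈ s, f x := (ciSup_pos (f := fun _ : x ∈ s => f x) hx).symm
    _ ≤ ⨆ y ∈ s, f y := le_ciSup hbdd x

private lemma biSup_nonneg' {α : Type*} {s : Set α} {f : α → ℝ}
    (h0 : ∀ x ∈ s, 0 ≤ f x) : 0 ≤ ⨆ x ∈ s, f x :=
  Real.iSup_nonneg fun x => Real.iSup_nonneg fun hx => h0 x hx

set_option maxHeartbeats 1000000 in
theorem stmt13 (n : ℕ) (hn : 1 ≤ n) (θ h : ℝ) (hθ : θ ∈ Set.Ioo 0 (Real.pi / 2))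
    (hh : 0 < h) (ε : ℝ) (hε : 0 < ε) :
    ∃ C : ℝ, 0 < C ∧
      ∀ Ω : Set (EuclideanSpace ℝ (Fin n)), IsOpen Ω → Bornology.IsBounded Ω →
        (∀ x ∈ closure Ω, ∃ ξ : EuclideanSpace ℝ (Fin n), ‖ξ‖ = 1 ∧
          {p : EuclideanSpace ℝ (Fin n) | ∃ y : EuclideanSpace ℝ (Fin n),
            p = x + y ∧ 0 < ‖y‖ ∧ ‖y‖ < h ∧ ‖y‖ * Real.cos θ < (inner ℝ y ξ : ℝ)} ⊆ Ω) →
        ∀ v : EuclideanSpace ℝ (Fin n) → ℝ, ContDiff ℝ 1 v →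
          (⨆ x ∈ closure Ω, |v x|) ≤
            ε * ((⨆ x ∈ closure Ω, |v x|) + ⨆ x ∈ closure Ω, ‖fderiv ℝ v x‖)
              + C * ∫ x in Ω, |v x| := by
  set E := EuclideanSpace ℝ (Fin n)
  obtain ⟨hθ0, hθ2⟩ := hθ
  have hπ : Real.pi / 2 ≤ Real.pi := by linarith [Real.pi_pos]
  have hcos1 : Real.cos θ < 1 := by
    have := Real.cos_lt_cos_of_nonneg_of_le_pi le_rfl (by linarith) hθ0
    simpa using this
  -- the parameter δ
  set δ : ℝ := min h (ε / 2) with hδdef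
  have hδ0 : 0 < δ := lt_min hh (by linarith)
  have hδh : δ ≤ h := min_le_left _ _
  have hδε : δ ≤ ε / 2 := min_le_right _ _
  -- the reference cone
  set ξ₀ : E := EuclideanSpace.single ⟨0, hn⟩ (1 : ℝ) with hξ₀def
  have hξ₀ : ‖ξ₀‖ = 1 := by
    rw [hξ₀def, EuclideanSpace.norm_single]; norm_num
  -- cone of a unit vector
  set cone : E → Set E := fun ξ =>
    {y : E | 0 < ‖y‖ ∧ ‖y‖ < δ ∧ ‖y‖ * Real.cos θ < (inner ℝ y ξ : ℝ)} with hconedef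
  have hconeOpen : ∀ ξ : E, IsOpen (cone ξ) := by
    intro ξ
    have h1 : IsOpen {y : E | 0 < ‖y‖} := isOpen_lt continuous_const continuous_norm
    have h2 : IsOpen {y : E | ‖y‖ < δ} := isOpen_lt continuous_norm continuous_const
    have h3 : IsOpen {y : E | ‖y‖ * Real.cos θ < (inner ℝ y ξ : ℝ)} :=
      isOpen_lt (continuous_norm.mul continuous_const)
        (continuous_id.inner continuous_const)
    have : cone ξ = {y : E | 0 < ‖y‖} ∩ ({y : E | ‖y‖ < δ} ∩
        {y : E | ‖y‖ * Real.cos θ < (inner ℝ y ξ : ℝ)}) := by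
      ext y; simp [hconedef, mem_setOf_eq, and_assoc]
    rw [this]; exact h1.inter (h2.inter h3)
  have hconeNe : ∀ ξ : E, ‖ξ‖ = 1 → (cone ξ).Nonempty := by
    intro ξ hξ
    have hn2 : ‖(δ / 2) • ξ‖ = δ / 2 := by
      rw [norm_smul, hξ, mul_one, Real.norm_eq_abs, abs_of_pos (by linarith)]
    refine ⟨(δ / 2) • ξ, ?_, ?_, ?_⟩
    · rw [hn2]; linarith
    · rw [hn2]; linarith
    · rw [hn2, real_inner_smul_left, real_inner_self_eq_norm_sq, hξ]
      nlinarith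
  -- volume of the cone is independent of the unit direction
  have hconeVol : ∀ ξ : E, ‖ξ‖ = 1 → volume (cone ξ) = volume (cone ξ₀) := by
    intro ξ hξ
    set f : E ≃ₗᵢ[ℝ] E := Submodule.reflection (ℝ ∙ (ξ - ξ₀))ᗮ with hfdef
    have hfξ : f ξ = ξ₀ := Submodule.reflection_sub (by rw [hξ, hξ₀])
    have hset : cone ξ = f ⁻¹' cone ξ₀ := by
      ext y
      simp only [hconedef, mem_preimage, mem_setOf_eq, LinearIsometryEquiv.norm_map]
      have : (inner ℝ (f y) ξ₀ : ℝ) = (inner ℝ y ξ : ℝ) := by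
        rw [← hfξ, LinearIsometryEquiv.inner_map_map]
      rw [this]
    rw [hset]
    exact f.measurePreserving.measure_preimage
      ((hconeOpen ξ₀).measurableSet.nullMeasurableSet)
  have hc0 : 0 < volume (cone ξ₀) := (hconeOpen ξ₀).measure_pos volume (hconeNe ξ₀ hξ₀)
  have hcfin : volume (cone ξ₀) < ⊤ := by
    refine lt_of_le_of_lt (measure_mono ?_) (measure_ball_lt_top (x := (0:E)) (r := δ))
    intro y hy
    simp only [hconedef, mem_setOf_eq] at hy
    simpa [Metric.mem_ball, dist_zero_right] using hy.2.1
  set c : ℝ := (volume (cone ξ₀)).toReal with hcdef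
  have hc : 0 < c := ENNReal.toReal_pos hc0.ne' hcfin.ne
  refine ⟨2 / c, by positivity, ?_⟩
  intro Ω hΩopen hΩbdd hΩcone v hv
  set s := closure Ω with hsdef
  have hscomp : IsCompact s := hΩbdd.isCompact_closure
  set M : ℝ := ⨆ x ∈ s, |v x| with hMdef
  set K : ℝ := ⨆ x ∈ s, ‖fderiv ℝ v x‖ with hKdef
  have hM0 : 0 ≤ M := biSup_nonneg' fun x _ => abs_nonneg _
  have hK0 : 0 ≤ K := biSup_nonneg' fun x _ => norm_nonneg _
  have hint : 0 ≤ ∫ x in Ω, |v x| := integral_nonneg fun x => abs_nonneg _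
  have hIntOn : IntegrableOn (fun x => |v x|) Ω volume := by
    have : IntegrableOn (fun x => |v x|) s volume :=
      (hv.continuous.abs).continuousOn.integrableOn_compact hscomp
    exact this.mono_set subset_closure
  by_cases hcase : M ≤ ε * (M + K)
  · calc M ≤ ε * (M + K) := hcase
      _ ≤ ε * (M + K) + 2 / c * ∫ x in Ω, |v x| := by
          have h2 : 0 ≤ 2 / c * ∫ x in Ω, |v x| :=
            mul_nonneg (by positivity) hint
          linarith
  · push_neg at hcase
    have hMpos : 0 < M := lt_of_le_of_lt (by positivity) hcase
    have hεK : ε * K < M := lt_of_le_of_lt (by nlinarith) hcase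
    -- s is nonempty
    have hsne : s.Nonempty := by
      by_contra hne
      rw [Set.not_nonempty_iff_eq_empty] at hne
      have : M ≤ 0 := biSup_le' le_rfl (by rw [hne]; intro x hx; exact absurd hx (Set.notMem_empty x))
      linarith
    -- maximizer of |v|
    obtain ⟨x₀, hx₀s, hx₀max⟩ := hscomp.exists_isMaxOn hsne
      (hv.continuous.abs.continuousOn)
    have hMx₀ : M ≤ |v x₀| := biSup_le' (abs_nonneg _) fun x hx => hx₀max hx
    -- bound on the derivative norm on s
    obtain ⟨z₀, hz₀s, hz₀max⟩ := hscomp.exists_isMaxOn hsne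
      ((hv.continuous_fderiv one_ne_zero).norm.continuousOn)
    have hKbound : ∀ z ∈ s, ‖fderiv ℝ v z‖ ≤ K := fun z hz =>
      le_biSup' (fun x hx => hz₀max hx) hz
    -- get the cone at x₀
    obtain ⟨ξ, hξ, hξcone⟩ := hΩcone x₀ hx₀s
    -- the shifted small cone
    set S : Set E := (fun p => -x₀ + p) ⁻¹' cone ξ with hSdef
    have hSsub : S ⊆ Ω := by
      intro p hp
      simp only [hSdef, mem_preimage] at hp
      obtain ⟨hp1, hp2, hp3⟩ := hp
      refine hξcone ⟨-x₀ + p, ?_, hp1, lt_of_lt_of_le hp2 hδh, hp3⟩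
      abel
    have hSvol : volume S = volume (cone ξ₀) := by
      rw [hSdef, measure_preimage_add volume (-x₀) (cone ξ), hconeVol ξ hξ]
    -- lower bound for |v| on S
    have hlow : ∀ p ∈ S, M / 2 ≤ |v p| := by
      intro p hp
      simp only [hSdef, mem_preimage] at hp
      obtain ⟨hp1, hp2, hp3⟩ := hp
      set y : E := -x₀ + p with hydef
      have hpy : p = x₀ + y := by rw [hydef]; abel
      -- the segment from x₀ to p lies in s
      have hseg : segment ℝ x₀ p ⊆ s := by
        intro z hz
        obtain ⟨a, b, ha, hb, hab, rfl⟩ := hz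
        rcases eq_or_lt_of_le hb with hb0 | hb0
        · have : a = 1 := by linarith
          rw [this, ← hb0]; simpa using hx₀s
        · have hz' : a • x₀ + b • p = x₀ + b • y := by
            rw [hpy]; rw [smul_add]
            have : a • x₀ + b • x₀ = x₀ := by
              rw [← add_smul, hab, one_smul]
            rw [← add_assoc, this]
          rw [hz']
          apply subset_closure
          refine hξcone ⟨b • y, rfl, ?_, ?_, ?_⟩
          · rw [norm_smul, Real.norm_eq_abs, abs_of_pos hb0]; positivity
          · rw [norm_smul, Real.norm_eq_abs, abs_of_pos hb0]
            have hb1 : b ≤ 1 := by linarith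
            calc b * ‖y‖ ≤ 1 * ‖y‖ := by nlinarith [norm_nonneg y]
              _ = ‖y‖ := one_mul _
              _ < δ := hp2
              _ ≤ h := hδh
          · rw [norm_smul, Real.norm_eq_abs, abs_of_pos hb0, real_inner_smul_left]
            calc b * ‖y‖ * Real.cos θ = b * (‖y‖ * Real.cos θ) := by ring
              _ < b * (inner ℝ y ξ : ℝ) := by
                  exact mul_lt_mul_of_pos_left hp3 hb0
      -- mean value estimate
      have hmv : ‖v p - v x₀‖ ≤ K * ‖p - x₀‖ := by
        refine (convex_segment x₀ p).norm_image_sub_le_of_norm_fderiv_le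
          (fun z _ => (hv.differentiable one_ne_zero).differentiableAt)
          (fun z hz => hKbound z (hseg hz)) (left_mem_segment ℝ x₀ p)
          (right_mem_segment ℝ x₀ p)
      have hpx : ‖p - x₀‖ = ‖y‖ := by rw [hydef]; congr 1; abel
      have h1 : |v p| ≥ |v x₀| - K * ‖y‖ := by
        have := abs_sub_abs_le_abs_sub (v x₀) (v p)
        have h2 : |v x₀ - v p| ≤ K * ‖y‖ := by
          rw [abs_sub_comm]
          calc |v p - v x₀| = ‖v p - v x₀‖ := rfl
            _ ≤ K * ‖p - x₀‖ := hmv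
            _ = K * ‖y‖ := by rw [hpx]
        linarith
      have hKy : K * ‖y‖ ≤ K * δ := by nlinarith
      have hKδ : K * δ < M / 2 := by
        calc K * δ ≤ K * (ε / 2) := by nlinarith
          _ < M / 2 := by nlinarith
      linarith
    -- integral bound
    have hSmeas : MeasurableSet S :=
      ((hconeOpen ξ).preimage (continuous_const.add continuous_id)).measurableSet
    have hSfin : volume S ≠ ⊤ := by rw [hSvol]; exact hcfin.ne
    have hIntS : IntegrableOn (fun x => |v x|) S volume := hIntOn.mono_set hSsub
    have hint1 : M / 2 * (volume S).toReal ≤ ∫ x in S, |v x| :=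
      by have := setIntegral_ge_of_const_le hSmeas hSfin hlow hIntS
         rw [smul_eq_mul, Measure.real] at this; linarith
    have hint2 : (∫ x in S, |v x|) ≤ ∫ x in Ω, |v x| :=
      setIntegral_mono_set hIntOn (Filter.Eventually.of_forall fun x => abs_nonneg _)
        (HasSubset.Subset.eventuallyLE hSsub)
    have hvolS : (volume S).toReal = c := by rw [hSvol]
    have hfinal : M ≤ 2 / c * ∫ x in Ω, |v x| := by
      rw [hvolS] at hint1
      rw [div_mul_eq_mul_div, le_div_iff₀ hc]
      nlinarith
    nlinarith [mul_nonneg hε.le (add_nonneg hM0 hK0)]
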